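/- arXiv:1405.5167 — 5 statements merged into one kernel-verified Lean document; each statement's English description precedes it below -/
import Mathlib

section
/- If there exists μ ∈ [0,1] with A^T Q A − μ Q negative semidefinite, then the set {x ∈ R^n : x^T Q x ≤ 1} is invariant under the map x ↦ A x, for any symmetric matrix Q (not necessarily positive definite). -/
open Matrix

theorem quadratic_set_invariant_of_mu {n : ℕ} (A Q : Matrix (Fin n) (Fin n) ℝ)
    (hQ : Q.IsSymm)
    (h : ∃ μ : ℝ, 0 ≤ μ ∧ μ ≤ 1 ∧
        ∀ x : Fin n → ℝ, x ⬝ᵥ (Aᵀ * Q * A - μ • Q).mulVec x ≤ 0) :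
    ∀ x : Fin n → ℝ, x ⬝ᵥ Q.mulVec x ≤ 1 →
      (A.mulVec x) ⬝ᵥ Q.mulVec (A.mulVec x) ≤ 1 := by
  obtain ⟨μ, hμ0, hμ1, hneg⟩ := h
  intro x hx
  have key := hneg x
  have h1 : x ⬝ᵥ (Aᵀ * Q * A - μ • Q).mulVec x
      = (A.mulVec x) ⬝ᵥ Q.mulVec (A.mulVec x) - μ * (x ⬝ᵥ Q.mulVec x) := by
    rw [sub_mulVec, dotProduct_sub, smul_mulVec, dotProduct_smul]
    rw [← mulVec_mulVec, ← mulVec_mulVec, dotProduct_mulVec, vecMul_transpose]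
    simp [smul_eq_mul, mul_assoc]
  have h2 : (A.mulVec x) ⬝ᵥ Q.mulVec (A.mulVec x) ≤ μ * (x ⬝ᵥ Q.mulVec x) := by
    linarith [h1 ▸ key]
  calc (A.mulVec x) ⬝ᵥ Q.mulVec (A.mulVec x) ≤ μ * (x ⬝ᵥ Q.mulVec x) := h2
    _ ≤ μ * 1 := by nlinarith
    _ ≤ 1 := by linarith
end

section
/- If (Ax)^T Q x ≤ 0 for all x on the boundary {x : x^T Q x = 1} of the ellipsoid, then A^T Q + Q A is negative semidefinite. -/
open Matrix

theorem lyapunov_nsd_of_boundary {n : ℕ} (A Q : Matrix (Fin n) (Fin n) ℝ)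
    (hQ : Q.PosDef)
    (h : ∀ x : Fin n → ℝ, x ⬝ᵥ Q.mulVec x = 1 → (A.mulVec x) ⬝ᵥ Q.mulVec x ≤ 0) :
    ∀ x : Fin n → ℝ, x ⬝ᵥ (Aᵀ * Q + Q * A).mulVec x ≤ 0 := by
  intro x
  have key : (A.mulVec x) ⬝ᵥ Q.mulVec x ≤ 0 := by
    by_cases hx : x = 0
    · simp [hx]
    · have hpos : 0 < x ⬝ᵥ Q.mulVec x := by simpa using hQ.dotProduct_mulVec_pos hx
      set c : ℝ := Real.sqrt (x ⬝ᵥ Q.mulVec x) with hc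
      have hcpos : 0 < c := Real.sqrt_pos.mpr hpos
      have hc2 : c * c = x ⬝ᵥ Q.mulVec x := Real.mul_self_sqrt hpos.le
      have hy : (c⁻¹ • x) ⬝ᵥ Q.mulVec (c⁻¹ • x) = 1 := by
        rw [Matrix.mulVec_smul, smul_dotProduct, dotProduct_smul]
        field_simp
        rw [smul_eq_mul, smul_eq_mul, ← hc2]
        field_simp
      have := h (c⁻¹ • x) hy
      rw [Matrix.mulVec_smul, Matrix.mulVec_smul, smul_dotProduct, dotProduct_smul] at this
      rw [smul_eq_mul, smul_eq_mul] at this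
      have h2 : (0:ℝ) < c⁻¹ * c⁻¹ := by positivity
      nlinarith [this]
  have hsym : Qᵀ = Q := hQ.1.eq
  have expand : x ⬝ᵥ (Aᵀ * Q + Q * A).mulVec x = 2 * ((A.mulVec x) ⬝ᵥ Q.mulVec x) := by
    rw [Matrix.add_mulVec, dotProduct_add, ← Matrix.mulVec_mulVec, ← Matrix.mulVec_mulVec]
    rw [Matrix.dotProduct_mulVec x Aᵀ, Matrix.vecMul_transpose]
    rw [Matrix.dotProduct_mulVec x Q, ← hsym, Matrix.vecMul_transpose,
      dotProduct_comm, hsym]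
    ring
  rw [expand]
  linarith
end

section
/- The exponential e^{At} leaves the set {x : x^T Q x = 1} invariant for all t ≥ 0 and all x_0 with x_0^T Q x_0 = 1 if and only if the matrices Q̃_{k−1} = Σ_{i=0}^{k−1} (1/(i!(k−1−i)!)) (A^i)^T Q A^{k−i−1} vanish for all k ≥ 2. -/
open Matrix

section helpers

variable {n : ℕ}

lemma bilin_zero_of_quad' (C : Matrix (Fin n) (Fin n) ℝ) (hsymm : Cᵀ = C)
    (h : ∀ y : Fin n → ℝ, y ⬝ᵥ C.mulVec y = 0) : C = 0 := by
  have hb : ∀ y z : Fin n → ℝ, y ⬝ᵥ C.mulVec z = 0 := by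
    intro y z
    have h1 := h (y + z)
    have h2 := h y
    have h3 := h z
    have hzy : z ⬝ᵥ C.mulVec y = y ⬝ᵥ C.mulVec z := by
      rw [Matrix.dotProduct_mulVec, ← Matrix.mulVec_transpose, hsymm, dotProduct_comm]
    simp only [Matrix.mulVec_add, dotProduct_add, add_dotProduct, h2, h3, hzy] at h1
    linarith
  ext i j
  have := hb (Pi.single i 1) (Pi.single j 1)
  simpa [Matrix.mulVec_single, dotProduct, Pi.single_apply, Finset.sum_ite_eq] using this

lemma tilde_zero_of_C' (A Q : Matrix (Fin n) (Fin n) ℝ) (hC : Aᵀ * Q + Q * A = 0) :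
    ∀ k : ℕ, 2 ≤ k →
      ∑ i ∈ Finset.range k,
        ((1 : ℝ) / (Nat.factorial i * Nat.factorial (k - 1 - i))) •
          ((A ^ i)ᵀ * Q * A ^ (k - 1 - i)) = 0 := by
  have hQA : ∀ j : ℕ, Q * A ^ j = ((-1 : ℝ)) ^ j • ((A ^ j)ᵀ * Q) := by
    intro j
    induction j with
    | zero => simp
    | succ j ih =>
      have hqa : Q * A = -(Aᵀ * Q) := by
        rw [eq_neg_iff_add_eq_zero, add_comm]; exact hC
      rw [pow_succ, ← mul_assoc, ih, Matrix.smul_mul, mul_assoc, hqa, pow_succ']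
      rw [Matrix.transpose_mul, mul_neg, ← mul_assoc]
      simp only [smul_neg, ← neg_smul, pow_succ, transpose_pow]
      rw [show (-1 : ℝ) * (-1:ℝ)^j = -((-1:ℝ))^j by ring, neg_smul, neg_smul]
      congr 2
      rw [← pow_succ, ← pow_succ']
  intro k hk
  obtain ⟨m, rfl⟩ : ∃ m, k = m + 1 := ⟨k - 1, (Nat.succ_pred_eq_of_pos (by omega)).symm⟩
  have hm : 1 ≤ m := by omega
  have hterm : ∀ i ∈ Finset.range (m + 1),
      ((1 : ℝ) / (Nat.factorial i * Nat.factorial (m + 1 - 1 - i))) •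
        ((A ^ i)ᵀ * Q * A ^ (m + 1 - 1 - i))
      = (((-1 : ℝ)) ^ (m - i) * ((m.choose i : ℝ) / (Nat.factorial m))) •
          ((A ^ m)ᵀ * Q) := by
    intro i hi
    have hi' : i ≤ m := by simpa using Nat.lt_succ_iff.mp (Finset.mem_range.mp hi)
    have h1 : m + 1 - 1 - i = m - i := by omega
    rw [h1, mul_assoc, hQA (m - i), Matrix.mul_smul, ← mul_assoc, ← Matrix.transpose_mul,
      ← pow_add, Nat.sub_add_cancel hi', smul_smul]
    congr 1
    have hfac : (m.choose i : ℝ) * (Nat.factorial i) * (Nat.factorial (m - i))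
        = (Nat.factorial m) := by
      exact_mod_cast congrArg (Nat.cast : ℕ → ℝ) (Nat.choose_mul_factorial_mul_factorial hi')
    have hi0 : (Nat.factorial i : ℝ) ≠ 0 := by positivity
    have hmi0 : (Nat.factorial (m - i) : ℝ) ≠ 0 := by positivity
    have hm0 : (Nat.factorial m : ℝ) ≠ 0 := by positivity
    field_simp
    linear_combination (-(1:ℝ)) * hfac
  rw [Finset.sum_congr rfl hterm, ← Finset.sum_smul]
  have hs : ∑ i ∈ Finset.range (m + 1),
      ((-1 : ℝ)) ^ (m - i) * ((m.choose i : ℝ) / (Nat.factorial m)) = 0 := by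
    have hap := add_pow (1 : ℝ) (-1) m
    rw [show (1 : ℝ) + -1 = 0 by ring, zero_pow (by omega : m ≠ 0)] at hap
    simp only [one_pow, one_mul] at hap
    calc ∑ i ∈ Finset.range (m + 1), ((-1:ℝ)) ^ (m - i) * ((m.choose i : ℝ) / (Nat.factorial m))
        = (∑ i ∈ Finset.range (m + 1), ((-1:ℝ)) ^ (m - i) * (m.choose i : ℝ)) /
            (Nat.factorial m) := by
          rw [Finset.sum_div]; exact Finset.sum_congr rfl fun i _ => (mul_div_assoc _ _ _).symm
      _ = 0 := by rw [← hap, zero_div]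
  rw [hs, zero_smul]

attribute [local instance] Matrix.linftyOpNormedRing Matrix.linftyOpNormedAlgebra

noncomputable def quadCLM (x : Fin n → ℝ) : Matrix (Fin n) (Fin n) ℝ →L[ℝ] ℝ :=
  LinearMap.toContinuousLinearMap
    { toFun := fun M => x ⬝ᵥ M.mulVec x
      map_add' := by intro M N; simp [Matrix.add_mulVec, dotProduct_add]
      map_smul' := by intro c M; simp [Matrix.smul_mulVec, dotProduct_smul] }

lemma quad_eq (x : Fin n → ℝ) (M Q : Matrix (Fin n) (Fin n) ℝ) :
    x ⬝ᵥ (Mᵀ * Q * M).mulVec x = (M.mulVec x) ⬝ᵥ (Q * M).mulVec x := by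
  rw [← Matrix.mulVec_mulVec, Matrix.dotProduct_mulVec, ← Matrix.vecMul_vecMul,
    Matrix.vecMul_transpose, ← Matrix.dotProduct_mulVec, Matrix.mulVec_mulVec]

lemma hasDerivAt_quad (A Q : Matrix (Fin n) (Fin n) ℝ) (x : Fin n → ℝ) (t : ℝ) :
    HasDerivAt (fun u : ℝ => ((NormedSpace.exp (u • A)).mulVec x) ⬝ᵥ
        Q.mulVec ((NormedSpace.exp (u • A)).mulVec x))
      (x ⬝ᵥ ((NormedSpace.exp (t • A))ᵀ * (Aᵀ * Q + Q * A) *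
        NormedSpace.exp (t • A)).mulVec x) t := by
  set e := fun u : ℝ => NormedSpace.exp (u • A) with he
  have h1 : HasDerivAt e (e t * A) t := hasDerivAt_exp_smul_const A t
  have hT : HasDerivAt (fun u => (e u)ᵀ) ((e t * A)ᵀ) t := by
    have := (LinearMap.toContinuousLinearMap
      (Matrix.transposeLinearEquiv (Fin n) (Fin n) ℝ ℝ).toLinearMap).hasFDerivAt.comp_hasDerivAt t h1
    exact this
  have h3 : HasDerivAt (fun u => (e u)ᵀ * Q * (e u))
      ((e t * A)ᵀ * Q * (e t) + (e t)ᵀ * Q * (e t * A)) t := (hT.mul_const Q).mul h1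
  have hcomm : A * e t = e t * A := (((Commute.refl A).smul_right t).exp_right).eq
  have hcT : Aᵀ * (e t)ᵀ = (e t)ᵀ * Aᵀ := by
    rw [← Matrix.transpose_mul, ← Matrix.transpose_mul, hcomm]
  have hder : (e t * A)ᵀ * Q * (e t) + (e t)ᵀ * Q * (e t * A)
      = (e t)ᵀ * (Aᵀ * Q + Q * A) * (e t) := by
    rw [Matrix.transpose_mul, ← hcomm]
    simp only [mul_add, add_mul, ← mul_assoc, hcT]
  rw [hder] at h3
  have h4 := (quadCLM x).hasFDerivAt.comp_hasDerivAt t h3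
  have h5 : (fun u => x ⬝ᵥ ((e u)ᵀ * Q * e u) *ᵥ x)
      = fun u => (e u *ᵥ x) ⬝ᵥ (Q * e u) *ᵥ x := funext fun u => quad_eq x (e u) Q
  simp [show ∀ M : Matrix (Fin n) (Fin n) ℝ, quadCLM x M = x ⬝ᵥ M.mulVec x from fun M => rfl, Function.comp_def, h5] at h4
  simp only [Matrix.mulVec_mulVec]
  exact h4

lemma exp_cont (A : Matrix (Fin n) (Fin n) ℝ) :
    Continuous (fun u : ℝ => NormedSpace.exp (u • A)) :=
  continuous_iff_continuousAt.mpr fun t => (hasDerivAt_exp_smul_const A t).continuousAt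

end helpers

theorem exp_boundary_invariant_iff {n : ℕ} (A Q : Matrix (Fin n) (Fin n) ℝ)
    (hQ : Q.PosDef) :
    (∀ t : ℝ, 0 ≤ t → ∀ x0 : Fin n → ℝ, x0 ⬝ᵥ Q.mulVec x0 = 1 →
        ((NormedSpace.exp (t • A)).mulVec x0) ⬝ᵥ
          Q.mulVec ((NormedSpace.exp (t • A)).mulVec x0) = 1) ↔
      (∀ k : ℕ, 2 ≤ k →
        ∑ i ∈ Finset.range k,
          ((1 : ℝ) / (Nat.factorial i * Nat.factorial (k - 1 - i))) •
            ((A ^ i)ᵀ * Q * A ^ (k - 1 - i)) = 0) := by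
  have hQs : Qᵀ = Q := by
    have := hQ.1
    simpa [Matrix.IsHermitian] using this
  constructor
  · intro H
    have hC : Aᵀ * Q + Q * A = 0 := by
      apply bilin_zero_of_quad'
      · rw [Matrix.transpose_add, Matrix.transpose_mul, Matrix.transpose_mul,
          Matrix.transpose_transpose, hQs, add_comm]
      · -- first, the quadratic form vanishes on the ellipsoid
        have key : ∀ x : Fin n → ℝ, x ⬝ᵥ Q.mulVec x = 1 →
            x ⬝ᵥ (Aᵀ * Q + Q * A).mulVec x = 0 := by
          intro x hx1
          set C := Aᵀ * Q + Q * A with hCdef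
          set g := fun t : ℝ => x ⬝ᵥ ((NormedSpace.exp (t • A))ᵀ * C *
            NormedSpace.exp (t • A)).mulVec x with hg
          have hgpos : ∀ t : ℝ, 0 < t → g t = 0 := by
            intro t ht
            have hf := hasDerivAt_quad A Q x t
            have hev : (fun u : ℝ => ((NormedSpace.exp (u • A)).mulVec x) ⬝ᵥ
                Q.mulVec ((NormedSpace.exp (u • A)).mulVec x)) =ᶠ[nhds t]
                (fun _ => (1 : ℝ)) := by
              filter_upwards [Ioi_mem_nhds ht] with s hs
              exact H s (le_of_lt hs) x hx1
            exact HasDerivAt.unique (hev.hasDerivAt_iff.mp hf) (hasDerivAt_const t 1)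
          have hgcont : Continuous g := by
            apply Continuous.dotProduct continuous_const
            exact Continuous.matrix_mulVec
              (((Continuous.matrix_transpose (exp_cont A)).matrix_mul
                continuous_const).matrix_mul (exp_cont A)) continuous_const
          have hg0 : g 0 = 0 := by
            have h1 : Filter.Tendsto g (nhdsWithin 0 (Set.Ioi 0)) (nhds (g 0)) :=
              (hgcont.continuousWithinAt).tendsto
            have h2 : Filter.Tendsto g (nhdsWithin 0 (Set.Ioi 0)) (nhds 0) := by
              refine Filter.Tendsto.congr' ?_ tendsto_const_nhds
              filter_upwards [self_mem_nhdsWithin] with s hs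
              exact (hgpos s hs).symm
            exact tendsto_nhds_unique h1 h2
          simpa [hg, NormedSpace.exp_zero] using hg0
        intro y
        by_cases hy : y = 0
        · simp [hy]
        · have hq : 0 < y ⬝ᵥ Q.mulVec y := by
            have := hQ.dotProduct_mulVec_pos hy
            simpa using this
          set c := Real.sqrt (y ⬝ᵥ Q.mulVec y) with hc
          have hcpos : 0 < c := Real.sqrt_pos.mpr hq
          have hc2 : c ^ 2 = y ⬝ᵥ Q.mulVec y := Real.sq_sqrt hq.le
          have hx1 : (c⁻¹ • y) ⬝ᵥ Q.mulVec (c⁻¹ • y) = 1 := by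
            rw [Matrix.mulVec_smul, smul_dotProduct, dotProduct_smul, smul_eq_mul,
              smul_eq_mul, ← hc2]
            field_simp
          have h0 := key (c⁻¹ • y) hx1
          rw [Matrix.mulVec_smul, smul_dotProduct, dotProduct_smul, smul_eq_mul,
            smul_eq_mul] at h0
          have hcne : c⁻¹ ≠ 0 := inv_ne_zero hcpos.ne'
          rcases mul_eq_zero.mp h0 with h | h
          · exact absurd h hcne
          · rcases mul_eq_zero.mp h with h' | h'
            · exact absurd h' hcne
            · exact h'
    exact tilde_zero_of_C' A Q hC
  · intro hR t ht x0 hx0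
    have h2 := hR 2 le_rfl
    rw [Finset.sum_range_succ, Finset.sum_range_succ, Finset.sum_range_zero] at h2
    simp [Nat.factorial] at h2
    have hC : Aᵀ * Q + Q * A = 0 := by rw [add_comm]; exact h2
    have hf : ∀ u : ℝ, HasDerivAt (fun u : ℝ => ((NormedSpace.exp (u • A)).mulVec x0) ⬝ᵥ
        Q.mulVec ((NormedSpace.exp (u • A)).mulVec x0)) 0 u := by
      intro u
      have := hasDerivAt_quad A Q x0 u
      rw [hC] at this
      simpa using this
    have hconst := is_const_of_deriv_eq_zero
      (fun u => (hf u).differentiableAt) (fun u => (hf u).deriv) t 0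
    rw [hconst]
    simpa [NormedSpace.exp_zero] using hx0
end

section
/- If A^T Q A − μ Q is negative semidefinite for some μ ≥ 0, then μ ≤ (u_n^T A^T Q A u_n)/λ_n and μ ≥ (u_i^T A^T Q A u_i)/λ_i for every i ∈ {1,...,n−1}. -/
open Matrix

theorem mu_bounds_lorenz {n : ℕ} (A Q : Matrix (Fin (n + 1)) (Fin (n + 1)) ℝ)
    (hQ : Q.IsSymm) (lam : Fin (n + 1) → ℝ) (u : Fin (n + 1) → (Fin (n + 1) → ℝ))
    (horth : ∀ i j, u i ⬝ᵥ u j = if i = j then 1 else 0)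
    (heig : ∀ i, Q.mulVec (u i) = lam i • u i)
    (hpos : ∀ i, i ≠ Fin.last n → 0 < lam i)
    (hneg : lam (Fin.last n) < 0)
    (μ : ℝ) (hμ : 0 ≤ μ)
    (hnsd : ∀ x : Fin (n + 1) → ℝ, x ⬝ᵥ (Aᵀ * Q * A - μ • Q).mulVec x ≤ 0) :
    μ ≤ (u (Fin.last n) ⬝ᵥ (Aᵀ * Q * A).mulVec (u (Fin.last n))) / lam (Fin.last n) ∧
      ∀ i, i ≠ Fin.last n →
        (u i ⬝ᵥ (Aᵀ * Q * A).mulVec (u i)) / lam i ≤ μ := by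
  have key : ∀ i, u i ⬝ᵥ (Aᵀ * Q * A).mulVec (u i) ≤ μ * lam i := by
    intro i
    have h := hnsd (u i)
    rw [sub_mulVec, smul_mulVec, dotProduct_sub, dotProduct_smul, heig i,
      dotProduct_smul, horth i i, if_pos rfl] at h
    simpa [smul_eq_mul] using sub_nonpos.mp h
  constructor
  · exact (le_div_iff_of_neg hneg).mpr (by simpa [mul_comm] using key (Fin.last n))
  · intro i hi
    exact (div_le_iff₀ (hpos i hi)).mpr (by simpa [mul_comm] using key i)
end

section
/- If A^T Q + Q A − η Q is negative semidefinite for some η ∈ R, then max_{1≤i≤n−1} u_i^T (A^T + A) u_i ≤ η ≤ u_n^T (A^T + A) u_n. -/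
open Matrix

theorem eta_bounds_lorenz {n : ℕ} (A Q : Matrix (Fin (n + 1)) (Fin (n + 1)) ℝ)
    (hQ : Q.IsSymm) (lam : Fin (n + 1) → ℝ) (u : Fin (n + 1) → (Fin (n + 1) → ℝ))
    (horth : ∀ i j, u i ⬝ᵥ u j = if i = j then 1 else 0)
    (heig : ∀ i, Q.mulVec (u i) = lam i • u i)
    (hpos : ∀ i, i ≠ Fin.last n → 0 < lam i)
    (hneg : lam (Fin.last n) < 0)
    (η : ℝ)
    (hnsd : ∀ x : Fin (n + 1) → ℝ, x ⬝ᵥ (Aᵀ * Q + Q * A - η • Q).mulVec x ≤ 0) :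
    (∀ i, i ≠ Fin.last n → u i ⬝ᵥ (Aᵀ + A).mulVec (u i) ≤ η) ∧
      η ≤ u (Fin.last n) ⬝ᵥ (Aᵀ + A).mulVec (u (Fin.last n)) := by
  have key : ∀ i, lam i * (u i ⬝ᵥ (Aᵀ + A).mulVec (u i) - η) ≤ 0 := by
    intro i
    have h := hnsd (u i)
    have hvv : u i ⬝ᵥ u i = 1 := by simpa using horth i i
    have hsym : ∀ w, u i ⬝ᵥ Q.mulVec w = lam i * (u i ⬝ᵥ w) := by
      intro w
      rw [Matrix.dotProduct_mulVec, ← Matrix.mulVec_transpose, hQ.eq, heig]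
      simp [smul_dotProduct]
    have e1 : u i ⬝ᵥ (Aᵀ * Q + Q * A - η • Q).mulVec (u i)
        = lam i * (u i ⬝ᵥ (Aᵀ + A).mulVec (u i) - η) := by
      rw [Matrix.sub_mulVec, Matrix.add_mulVec, ← Matrix.mulVec_mulVec,
        ← Matrix.mulVec_mulVec, heig, Matrix.smul_mulVec,
        Matrix.add_mulVec]
      simp only [dotProduct_sub, dotProduct_add, dotProduct_smul,
        Matrix.mulVec_smul, smul_eq_mul, hsym, hvv, mul_one]
      ring
    calc lam i * (u i ⬝ᵥ (Aᵀ + A).mulVec (u i) - η) = _ := e1.symm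
      _ ≤ 0 := h
  constructor
  · intro i hi
    nlinarith [key i, hpos i hi]
  · nlinarith [key (Fin.last n), hneg]
end
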